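/- arXiv:1603.07912 — 2 statements merged into one kernel-verified Lean document; each statement's English description precedes it below -/
import Mathlib

section
/- Let M = F_q[x]. The monoid homomorphism σ: A^+ → M defined by σ(a) = x^{deg_θ(a)} is not a semi-character; that is, there do not exist pairwise commuting F_q-algebra homomorphisms σ_1, ..., σ_s: F_q[θ] → F_q[x] with σ(a) = σ_1(a)···σ_s(a) for all monic a. -/
/-- The monoid homomorphism `σ : A⁺ → F_q[x]`, `a ↦ x^{deg_θ a}`, on monic
polynomials of `A = F_q[θ]`, is not a semi-character: it is not a finite product of
pairwise commuting `F_q`-algebra homomorphisms `F_q[θ] → F_q[x]`. -/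
theorem stmt2 (Fq : Type*) [Field Fq] [Fintype Fq] :
    ¬ ∃ (s : ℕ) (σ : Fin s → (Polynomial Fq →ₐ[Fq] Polynomial Fq)),
      (∀ (i j : Fin s) (a b : Polynomial Fq), σ i a * σ j b = σ j b * σ i a) ∧
      (∀ a : Polynomial Fq, a.Monic →
        (Polynomial.X : Polynomial Fq) ^ a.natDegree = ∏ i, σ i a) := by
  rintro ⟨s, σ, -, hσ⟩
  set p : Fin s → Polynomial Fq := fun i => σ i Polynomial.X with hp
  have h1 : (Polynomial.X : Polynomial Fq) = ∏ i, p i := by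
    simpa using hσ Polynomial.X Polynomial.monic_X
  have hX1 : (Polynomial.X + 1 : Polynomial Fq) = Polynomial.X + Polynomial.C 1 := by simp
  have h2 : (Polynomial.X : Polynomial Fq) = ∏ i, (p i + 1) := by
    have := hσ (Polynomial.X + 1) (by rw [hX1]; exact Polynomial.monic_X_add_C _)
    simpa [hX1, Polynomial.natDegree_X_add_C, map_add, map_one] using this
  -- evaluate h2 at 0 to find i with (p i + 1)(0) = 0
  have hev : ∃ i : Fin s, Polynomial.eval 0 (p i + 1) = 0 := by
    have h := congrArg (Polynomial.eval 0) h2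
    rw [Polynomial.eval_prod, Polynomial.eval_X] at h
    obtain ⟨i, -, hi⟩ := Finset.prod_eq_zero_iff.mp h.symm
    exact ⟨i, hi⟩
  obtain ⟨i, hi⟩ := hev
  have hd1 : p i ∣ Polynomial.X := h1 ▸ Finset.dvd_prod_of_mem _ (Finset.mem_univ i)
  have hd2 : (p i + 1) ∣ Polynomial.X := h2 ▸ Finset.dvd_prod_of_mem _ (Finset.mem_univ i)
  have hXd : (Polynomial.X : Polynomial Fq) ∣ (p i + 1) := by
    rw [Polynomial.X_dvd_iff, Polynomial.coeff_zero_eq_eval_zero]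
    exact hi
  -- p i annoyingly: p i eval 0 = -1
  have hpev : Polynomial.eval 0 (p i) = -1 := by
    have : Polynomial.eval 0 (p i) + 1 = 0 := by simpa using hi
    linear_combination this
  -- from hd1 : X = p i * v
  obtain ⟨v, hv⟩ := hd1
  have hv0 : Polynomial.eval 0 v = 0 := by
    have := congrArg (Polynomial.eval 0) hv
    simp [hpev] at this
    exact this
  have hXv : (Polynomial.X : Polynomial Fq) ∣ v := by
    rw [Polynomial.X_dvd_iff, Polynomial.coeff_zero_eq_eval_zero]; exact hv0
  obtain ⟨w, hw⟩ := hXv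
  have hXne : (Polynomial.X : Polynomial Fq) ≠ 0 := Polynomial.X_ne_zero
  have hunit : IsUnit (p i) := by
    have hcancel : (Polynomial.X : Polynomial Fq) * 1 = Polynomial.X * (p i * w) := by
      rw [mul_one]
      calc (Polynomial.X : Polynomial Fq) = p i * v := hv
        _ = p i * (Polynomial.X * w) := by rw [hw]
        _ = Polynomial.X * (p i * w) := by ring
    have := mul_left_cancel₀ hXne hcancel
    exact IsUnit.of_mul_eq_one _ this.symm
  obtain ⟨r, hr, hrc⟩ := Polynomial.isUnit_iff.mp hunit
  -- then p i + 1 = C (r + 1), but X ∣ p i + 1 forces r + 1 = 0, so p i + 1 = 0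
  have hc : p i + 1 = Polynomial.C (r + 1) := by rw [← hrc]; simp
  have hr0 : r + 1 = 0 := by
    have := hXd
    rw [hc, Polynomial.X_dvd_iff, Polynomial.coeff_C_zero] at this
    exact this
  have : (p i + 1) = 0 := by rw [hc, hr0, Polynomial.C_0]
  rw [this] at hd2
  exact hXne (zero_dvd_iff.mp hd2)
end

section
/- Let K be a field containing F_q with q > 2, let σ: F_q[θ] → Mat_{d×d}(K) be an F_q-algebra homomorphism, and let ρ_σ: GL_2(F_q[θ]) → GL_{2d}(K) be the associated block representation. Then ρ_σ is irreducible (i.e., no nonzero proper subspace of K^{2d} is invariant under all ρ_σ(γ)) if and only if σ is irreducible (i.e., no nonzero proper subspace of K^d is invariant under all σ(a), a ∈ F_q[θ]). -/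
/-- The block map `ρ_σ` associated to an algebra representation
`σ : F_q[θ] → Mat_{d×d}(K)`. -/
noncomputable def rhoSigma' {Fq K : Type*} [Field Fq] [Field K] [Algebra Fq K] {d : ℕ}
    (σ : Polynomial Fq →ₐ[Fq] Matrix (Fin d) (Fin d) K)
    (γ : GL (Fin 2) (Polynomial Fq)) :
    Matrix (Fin d ⊕ Fin d) (Fin d ⊕ Fin d) K :=
  Matrix.fromBlocks (σ ((γ : Matrix (Fin 2) (Fin 2) (Polynomial Fq)) 0 0))
    (σ ((γ : Matrix (Fin 2) (Fin 2) (Polynomial Fq)) 0 1))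
    (σ ((γ : Matrix (Fin 2) (Fin 2) (Polynomial Fq)) 1 0))
    (σ ((γ : Matrix (Fin 2) (Fin 2) (Polynomial Fq)) 1 1))

private lemma rho_mulVec' {Fq K : Type*} [Field Fq] [Field K] [Algebra Fq K] {d : ℕ}
    (σ : Polynomial Fq →ₐ[Fq] Matrix (Fin d) (Fin d) K)
    (γ : GL (Fin 2) (Polynomial Fq)) (v : Fin d ⊕ Fin d → K) :
    (rhoSigma' σ γ).mulVec v =
      Sum.elim
        ((σ ((γ : Matrix (Fin 2) (Fin 2) (Polynomial Fq)) 0 0)).mulVec (v ∘ Sum.inl)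
          + (σ ((γ : Matrix (Fin 2) (Fin 2) (Polynomial Fq)) 0 1)).mulVec (v ∘ Sum.inr))
        ((σ ((γ : Matrix (Fin 2) (Fin 2) (Polynomial Fq)) 1 0)).mulVec (v ∘ Sum.inl)
          + (σ ((γ : Matrix (Fin 2) (Fin 2) (Polynomial Fq)) 1 1)).mulVec (v ∘ Sum.inr)) := by
  rw [rhoSigma', Matrix.fromBlocks_mulVec]

/-- upper triangular unipotent `!![1, a; 0, 1]` as element of GL₂ -/
private def uGL {R : Type*} [CommRing R] (a : R) : GL (Fin 2) R :=
  ⟨!![1, a; 0, 1], !![1, -a; 0, 1], by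
    rw [Matrix.mul_fin_two]; rw [Matrix.one_fin_two]; ring_nf, by
    rw [Matrix.mul_fin_two]; rw [Matrix.one_fin_two]; ring_nf⟩

/-- lower triangular unipotent `!![1, 0; a, 1]` as element of GL₂ -/
private def lGL {R : Type*} [CommRing R] (a : R) : GL (Fin 2) R :=
  ⟨!![1, 0; a, 1], !![1, 0; -a, 1], by
    rw [Matrix.mul_fin_two]; rw [Matrix.one_fin_two]; ring_nf, by
    rw [Matrix.mul_fin_two]; rw [Matrix.one_fin_two]; ring_nf⟩

/-- diagonal `!![u, 0; 0, 1]` for a unit `u`, as element of GL₂ -/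
private def dGL {R : Type*} [CommRing R] (u : Rˣ) : GL (Fin 2) R :=
  ⟨!![(u : R), 0; 0, 1], !![((u⁻¹ : Rˣ) : R), 0; 0, 1], by
    rw [Matrix.mul_fin_two]; rw [Matrix.one_fin_two]; simp, by
    rw [Matrix.mul_fin_two]; rw [Matrix.one_fin_two]; simp⟩

/-- (for `q > 2`) the block representation `ρ_σ` of `GL_2(F_q[θ])` on `K^{2d}`
is irreducible iff the algebra representation `σ` is irreducible on `K^d`. -/
theorem stmt4 (Fq K : Type*) [Field Fq] [Fintype Fq] (hq : 2 < Fintype.card Fq)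
    [Field K] [Algebra Fq K] (d : ℕ)
    (σ : Polynomial Fq →ₐ[Fq] Matrix (Fin d) (Fin d) K) :
    (∀ V : Submodule K (Fin d ⊕ Fin d → K),
      (∀ γ : GL (Fin 2) (Polynomial Fq), ∀ v ∈ V, (rhoSigma' σ γ).mulVec v ∈ V) →
        V = ⊥ ∨ V = ⊤) ↔
    (∀ W : Submodule K (Fin d → K),
      (∀ a : Polynomial Fq, ∀ w ∈ W, (σ a).mulVec w ∈ W) → W = ⊥ ∨ W = ⊤) := by
  constructor
  · -- ρ irreducible ⟹ σ irreducible
    intro hρ W hW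
    set V : Submodule K (Fin d ⊕ Fin d → K) :=
      { carrier := {v | (v ∘ Sum.inl) ∈ W ∧ (v ∘ Sum.inr) ∈ W}
        zero_mem' := by
          constructor <;> · show (fun _ => (0:K)) ∈ W; exact W.zero_mem
        add_mem' := by
          rintro a b ⟨ha1, ha2⟩ ⟨hb1, hb2⟩
          exact ⟨W.add_mem ha1 hb1, W.add_mem ha2 hb2⟩
        smul_mem' := by
          rintro c a ⟨ha1, ha2⟩
          exact ⟨W.smul_mem c ha1, W.smul_mem c ha2⟩ } with hVdef
    have hVinv : ∀ γ : GL (Fin 2) (Polynomial Fq), ∀ v ∈ V, (rhoSigma' σ γ).mulVec v ∈ V := by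
      rintro γ v ⟨hv1, hv2⟩
      rw [rho_mulVec']
      constructor
      · rw [Sum.elim_comp_inl]
        exact W.add_mem (hW _ _ hv1) (hW _ _ hv2)
      · rw [Sum.elim_comp_inr]
        exact W.add_mem (hW _ _ hv1) (hW _ _ hv2)
    rcases hρ V hVinv with h | h
    · left
      rw [eq_bot_iff]
      intro w hw
      have hv : Sum.elim w (0 : Fin d → K) ∈ V := by
        constructor
        · rw [Sum.elim_comp_inl]; exact hw
        · rw [Sum.elim_comp_inr]; exact W.zero_mem
      rw [h] at hv
      have : Sum.elim w (0 : Fin d → K) = 0 := hv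
      have := congrFun this
      ext i
      simpa using this (Sum.inl i)
    · right
      rw [eq_top_iff]
      intro w _
      have hv : Sum.elim w (0 : Fin d → K) ∈ V := h ▸ Submodule.mem_top
      have := hv.1
      rwa [Sum.elim_comp_inl] at this
  · -- σ irreducible ⟹ ρ irreducible
    intro hσ V hV
    classical
    -- a scalar λ ≠ 0, 1
    obtain ⟨l, hl0, hl1⟩ : ∃ l : Fq, l ≠ 0 ∧ l ≠ 1 := by
      by_contra h
      push_neg at h
      have hsub : (Finset.univ : Finset Fq) ⊆ ({0, 1} : Finset Fq) := by
        intro x _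
        simp only [Finset.mem_insert, Finset.mem_singleton]
        rcases eq_or_ne x 0 with hx | hx
        · exact Or.inl hx
        · exact Or.inr (h x hx)
      have hle := Finset.card_le_card hsub
      have h2 : ({0, 1} : Finset Fq).card ≤ 2 := by
        apply le_trans (Finset.card_insert_le _ _)
        simp
      rw [Finset.card_univ] at hle
      omega
    set c : K := algebraMap Fq K l with hc
    have hc1 : c ≠ 1 := by
      intro h
      apply hl1
      have h' : algebraMap Fq K l = algebraMap Fq K 1 := by rw [map_one]; exact h
      exact (algebraMap Fq K).injective h'
    have hcne : c - 1 ≠ 0 := sub_ne_zero.mpr hc1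
    -- σ of special entries
    have hσ1 : ∀ x : Fin d → K, (σ 1).mulVec x = x := by
      intro x; rw [map_one, Matrix.one_mulVec]
    have hσ0 : ∀ x : Fin d → K, (σ 0).mulVec x = 0 := by
      intro x; rw [map_zero, Matrix.zero_mulVec]
    have hσC : ∀ x : Fin d → K, (σ (Polynomial.C l)).mulVec x = c • x := by
      intro x
      rw [Polynomial.C_eq_algebraMap, AlgHom.commutes, Algebra.algebraMap_eq_smul_one,
        Matrix.smul_mulVec, Matrix.one_mulVec, hc, algebraMap_smul]
    -- the unit l in Fq[θ]
    set lu : (Polynomial Fq)ˣ :=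
      ⟨Polynomial.C l, Polynomial.C l⁻¹, by
        rw [← Polynomial.C_mul, mul_inv_cancel₀ hl0, Polynomial.C_1], by
        rw [← Polynomial.C_mul, inv_mul_cancel₀ hl0, Polynomial.C_1]⟩ with hlu
    -- splitting: components of elements of V are in V
    have hsplit : ∀ v ∈ V, Sum.elim (v ∘ Sum.inl) (0 : Fin d → K) ∈ V ∧
        Sum.elim (0 : Fin d → K) (v ∘ Sum.inr) ∈ V := by
      intro v hv
      have h1 := hV (dGL lu) v hv
      rw [rho_mulVec'] at h1
      have he : ((dGL lu : GL (Fin 2) (Polynomial Fq)) : Matrix (Fin 2) (Fin 2) (Polynomial Fq))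
          = !![Polynomial.C l, 0; 0, 1] := rfl
      rw [he] at h1
      rw [show (!![Polynomial.C l, 0; 0, 1] : Matrix (Fin 2) (Fin 2) (Polynomial Fq)) 0 0 = Polynomial.C l from rfl,
        show (!![Polynomial.C l, 0; 0, 1] : Matrix (Fin 2) (Fin 2) (Polynomial Fq)) 0 1 = 0 from rfl,
        show (!![Polynomial.C l, 0; 0, 1] : Matrix (Fin 2) (Fin 2) (Polynomial Fq)) 1 0 = 0 from rfl,
        show (!![Polynomial.C l, 0; 0, 1] : Matrix (Fin 2) (Fin 2) (Polynomial Fq)) 1 1 = 1 from rfl] at h1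
      rw [hσC, hσ0, hσ0, hσ1, add_zero, zero_add] at h1
      -- h1 : Sum.elim (c • (v ∘ inl)) (v ∘ inr) ∈ V
      have h2 : Sum.elim ((c - 1) • (v ∘ Sum.inl)) (0 : Fin d → K) ∈ V := by
        have h3 := V.sub_mem h1 hv
        convert h3 using 1
        funext i
        cases i with
        | inl i => simp [sub_smul]
        | inr i => simp
      have h4 : Sum.elim (v ∘ Sum.inl) (0 : Fin d → K) ∈ V := by
        have h5 := V.smul_mem (c - 1)⁻¹ h2
        convert h5 using 1
        funext i
        cases i with
        | inl i => simp [smul_smul, ← mul_assoc, inv_mul_cancel₀ hcne]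
        | inr i => simp
      refine ⟨h4, ?_⟩
      have h6 := V.sub_mem hv h4
      convert h6 using 1
      funext i
      cases i with
      | inl i => simp
      | inr i => simp
    -- the submodule W of first-components
    set W : Submodule K (Fin d → K) :=
      { carrier := {w | Sum.elim w (0 : Fin d → K) ∈ V}
        zero_mem' := by
          show Sum.elim (0 : Fin d → K) (0 : Fin d → K) ∈ V
          have : Sum.elim (0 : Fin d → K) (0 : Fin d → K) = (0 : Fin d ⊕ Fin d → K) := by
            funext i; cases i <;> simp
          rw [this]; exact V.zero_mem
        add_mem' := by
          intro a b ha hb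
          have h := V.add_mem ha hb
          show Sum.elim (a + b) (0 : Fin d → K) ∈ V
          have he : Sum.elim (a + b) (0 : Fin d → K) = Sum.elim a 0 + Sum.elim b 0 := by
            funext i; cases i <;> simp
          rw [he]; exact h
        smul_mem' := by
          intro r a ha
          have h := V.smul_mem r ha
          show Sum.elim (r • a) (0 : Fin d → K) ∈ V
          have he : Sum.elim (r • a) (0 : Fin d → K) = r • Sum.elim a 0 := by
            funext i; cases i <;> simp
          rw [he]; exact h } with hWdef
    -- action of upper unipotents on second components
    have hup : ∀ y : Fin d → K, Sum.elim (0 : Fin d → K) y ∈ V →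
        ∀ a : Polynomial Fq, (σ a).mulVec y ∈ W := by
      intro y hy a
      have h1 := hV (uGL a) _ hy
      rw [rho_mulVec'] at h1
      have he : ((uGL a : GL (Fin 2) (Polynomial Fq)) : Matrix (Fin 2) (Fin 2) (Polynomial Fq))
          = !![1, a; 0, 1] := rfl
      rw [he] at h1
      rw [show (!![1, a; 0, 1] : Matrix (Fin 2) (Fin 2) (Polynomial Fq)) 0 0 = 1 from rfl,
        show (!![1, a; 0, 1] : Matrix (Fin 2) (Fin 2) (Polynomial Fq)) 0 1 = a from rfl,
        show (!![1, a; 0, 1] : Matrix (Fin 2) (Fin 2) (Polynomial Fq)) 1 0 = 0 from rfl,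
        show (!![1, a; 0, 1] : Matrix (Fin 2) (Fin 2) (Polynomial Fq)) 1 1 = 1 from rfl] at h1
      rw [Sum.elim_comp_inl, Sum.elim_comp_inr, hσ1, hσ1, hσ0] at h1
      -- h1 : Sum.elim (σ(1) 0 + σ(a) y) (σ(0) 0 + σ(1) y) ∈ V
      show Sum.elim ((σ a).mulVec y) (0 : Fin d → K) ∈ V
      have h2 := V.sub_mem h1 hy
      convert h2 using 1
      funext i; cases i <;> simp
    -- action of lower unipotents on first components
    have hlow : ∀ x : Fin d → K, x ∈ W →
        ∀ a : Polynomial Fq, Sum.elim (0 : Fin d → K) ((σ a).mulVec x) ∈ V := by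
      intro x hx a
      have hx' : Sum.elim x (0 : Fin d → K) ∈ V := hx
      have h1 := hV (lGL a) _ hx'
      rw [rho_mulVec'] at h1
      have he : ((lGL a : GL (Fin 2) (Polynomial Fq)) : Matrix (Fin 2) (Fin 2) (Polynomial Fq))
          = !![1, 0; a, 1] := rfl
      rw [he] at h1
      rw [show (!![1, 0; a, 1] : Matrix (Fin 2) (Fin 2) (Polynomial Fq)) 0 0 = 1 from rfl,
        show (!![1, 0; a, 1] : Matrix (Fin 2) (Fin 2) (Polynomial Fq)) 0 1 = 0 from rfl,
        show (!![1, 0; a, 1] : Matrix (Fin 2) (Fin 2) (Polynomial Fq)) 1 0 = a from rfl,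
        show (!![1, 0; a, 1] : Matrix (Fin 2) (Fin 2) (Polynomial Fq)) 1 1 = 1 from rfl] at h1
      rw [Sum.elim_comp_inl, Sum.elim_comp_inr, hσ1, hσ1, hσ0] at h1
      have h2 := V.sub_mem h1 hx'
      convert h2 using 1
      funext i; cases i <;> simp
    -- W is σ-invariant
    have hWinv : ∀ a : Polynomial Fq, ∀ w ∈ W, (σ a).mulVec w ∈ W := by
      intro a w hw
      have h1 := hlow w hw 1
      rw [hσ1] at h1
      exact hup w h1 a
    rcases hσ W hWinv with h | h
    · left
      rw [eq_bot_iff]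
      intro v hv
      obtain ⟨h1, h2⟩ := hsplit v hv
      have hx : (v ∘ Sum.inl) ∈ W := h1
      have hy : (v ∘ Sum.inr) ∈ W := by
        have := hup _ h2 1
        rwa [hσ1] at this
      rw [h] at hx hy
      have hx0 : v ∘ Sum.inl = 0 := hx
      have hy0 : v ∘ Sum.inr = 0 := hy
      show v = 0
      funext i
      cases i with
      | inl i => exact congrFun hx0 i
      | inr i => exact congrFun hy0 i
    · right
      rw [eq_top_iff]
      intro v _
      have hx : (v ∘ Sum.inl) ∈ W := h ▸ Submodule.mem_top
      have hy : (v ∘ Sum.inr) ∈ W := h ▸ Submodule.mem_top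
      have h1 : Sum.elim (v ∘ Sum.inl) (0 : Fin d → K) ∈ V := hx
      have h2 : Sum.elim (0 : Fin d → K) (v ∘ Sum.inr) ∈ V := by
        have := hlow _ hy 1
        rwa [hσ1] at this
      have h3 := V.add_mem h1 h2
      convert h3 using 1
      funext i; cases i <;> simp
end
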